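/- With A_n, B_n as above and u_1, u_2 the two small roots of u^2 = z(1+u^7), one has A_n + B_n = [z^{7n−1}](u_1(z)^5 + u_2(z)^5), i.e., the sum u_1^5+u_2^5 is a power series in z whose coefficient of z^{7n−1} equals A_n+B_n. -/

import Mathlib

open PowerSeries


/-- `knuthA n` = number of North/East lattice paths from `(0,0)` to `(5n−1, 2n−1)`
staying weakly below `y = (2/5)x + 1/5` (`5y ≤ 2x + 1` at every vertex). -/
noncomputable def knuthA (n : ℕ) : ℕ :=
  Nat.card {l : List (ℕ × ℕ) //
    (∀ s ∈ l, s = (1, 0) ∨ s = (0, 1)) ∧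
    l.sum = (5 * n - 1, 2 * n - 1) ∧
    ∀ k ≤ l.length, 5 * ((l.take k).sum).2 ≤ 2 * ((l.take k).sum).1 + 1}

/-- `knuthB n` = number of such paths staying weakly below `y = (2/5)x`. -/
noncomputable def knuthB (n : ℕ) : ℕ :=
  Nat.card {l : List (ℕ × ℕ) //
    (∀ s ∈ l, s = (1, 0) ∨ s = (0, 1)) ∧
    l.sum = (5 * n - 1, 2 * n - 1) ∧
    ∀ k ≤ l.length, 5 * ((l.take k).sum).2 ≤ 2 * ((l.take k).sum).1}

def WalkP (a b : ℕ) (N : ℕ) (l : List ℤ) : Prop :=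
  (∀ s ∈ l, s = 5 ∨ s = -2) ∧ l.length = N ∧
    (∀ k : ℕ, 0 ≤ (a : ℤ) + (l.drop k).sum) ∧ (a : ℤ) + l.sum = b

noncomputable def wcount (a b : ℕ) (N : ℕ) : ℕ :=
  Nat.card {l : List ℤ // WalkP a b N l}

instance walk_finite (a b N : ℕ) : Finite {l : List ℤ // WalkP a b N l} := by
  let F : {l : List ℤ // WalkP a b N l} → List.Vector Bool N :=
    fun l => ⟨(l : List ℤ).map (fun s => decide (s = 5)), by simp [l.2.2.1]⟩
  have hinj : Function.Injective F := by
    rintro ⟨l, hl⟩ ⟨m, hm⟩ h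
    simp only [F, Subtype.mk.injEq] at h ⊢
    have hlen : l.length = m.length := by rw [hl.2.1, hm.2.1]
    refine List.ext_getElem hlen ?_
    intro i h1 h2
    have h5 : ∀ (t : List ℤ), (∀ s ∈ t, s = 5 ∨ s = -2) → ∀ (j : ℕ) (hj : j < t.length),
        t[j] = if (decide (t[j] = 5)) then (5:ℤ) else -2 := by
      intro t ht j hj
      rcases ht t[j] (t.getElem_mem hj) with h' | h' <;> simp [h']
    have hgl := h5 l hl.1 i h1
    have hgm := h5 m hm.1 i h2
    have hv : (l.map (fun s => decide (s = 5))) = (m.map (fun s => decide (s = 5))) :=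
      congrArg Subtype.val h
    have : (l.map (fun s => decide (s = 5)))[i]'(by simpa using h1)
        = (m.map (fun s => decide (s = 5)))[i]'(by simpa using h2) := by
      simp only [hv]
    simp only [List.getElem_map] at this
    rw [hgl, hgm, this]
  exact Finite.of_injective F hinj

lemma wcount_zero (a b : ℕ) : wcount a b 0 = if a = b then 1 else 0 := by
  unfold wcount
  split_ifs with h
  · subst h
    rw [Nat.card_eq_one_iff_unique]
    constructor
    · constructor
      rintro ⟨l, hl⟩ ⟨m, hm⟩
      have : l = [] := List.length_eq_zero_iff.mp hl.2.1
      have : m = [] := List.length_eq_zero_iff.mp hm.2.1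
      subst_vars; rfl
    · exact ⟨⟨[], by intro s hs; simp at hs, rfl, by intro k; simp, by simp⟩⟩
  · rw [Nat.card_eq_zero]
    left
    constructor
    rintro ⟨l, hl⟩
    have hl0 : l = [] := List.length_eq_zero_iff.mp hl.2.1
    subst hl0
    have := hl.2.2.2
    simp at this
    exact h (by exact_mod_cast this)

lemma cons_walk5 {a b N : ℕ} {t : List ℤ} (hb : 5 ≤ b) (ht : WalkP a (b - 5) N t) :
    WalkP a b (N + 1) (5 :: t) := by
  obtain ⟨h1, h2, h3, h4⟩ := ht
  have hb' : ((b - 5 : ℕ) : ℤ) = (b : ℤ) - 5 := by omega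
  refine ⟨?_, by simp [h2], ?_, ?_⟩
  · rintro s hs
    rcases List.mem_cons.mp hs with h | h
    · left; exact h
    · exact h1 s h
  · intro k
    cases k with
    | zero =>
      simp only [List.drop_zero, List.sum_cons]
      omega
    | succ k => simpa using h3 k
  · simp only [List.sum_cons]; omega

lemma cons_walk2 {a b N : ℕ} {t : List ℤ} (ht : WalkP a (b + 2) N t) :
    WalkP a b (N + 1) ((-2) :: t) := by
  obtain ⟨h1, h2, h3, h4⟩ := ht
  refine ⟨?_, by simp [h2], ?_, ?_⟩
  · rintro s hs
    rcases List.mem_cons.mp hs with h | h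
    · right; exact h
    · exact h1 s h
  · intro k
    cases k with
    | zero =>
      simp only [List.drop_zero, List.sum_cons]
      push_cast at h4 ⊢
      omega
    | succ k => simpa using h3 k
  · simp only [List.sum_cons]; push_cast at h4 ⊢; omega

lemma wcount_succ (a b N : ℕ) :
    wcount a b (N + 1) = (if 5 ≤ b then wcount a (b - 5) N else 0) + wcount a (b + 2) N := by
  by_cases hb : 5 ≤ b
  · simp only [hb, if_true]
    rw [show wcount a b (N+1) = Nat.card ({l : List ℤ // WalkP a (b-5) N l} ⊕
        {l : List ℤ // WalkP a (b+2) N l}) from ?_, Nat.card_sum]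
    · rfl
    unfold wcount
    refine (Nat.card_congr (Equiv.ofBijective (fun x => ?_) ⟨?_, ?_⟩)).symm
    · exact Sum.elim (fun t => (⟨5 :: t.1, cons_walk5 hb t.2⟩ : {l : List ℤ // WalkP a b (N+1) l}))
        (fun t => ⟨(-2) :: t.1, cons_walk2 t.2⟩) x
    · rintro (⟨t, ht⟩ | ⟨t, ht⟩) (⟨t', ht'⟩ | ⟨t', ht'⟩) h <;>
        simp only [Sum.elim_inl, Sum.elim_inr, Subtype.mk.injEq, List.cons.injEq] at h <;>
        first
        | (simp only [Sum.inl.injEq, Sum.inr.injEq, Subtype.mk.injEq]; exact h.2)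
        | (exfalso; omega)
    · rintro ⟨l, hl⟩
      obtain ⟨h1, h2, h3, h4⟩ := hl
      cases l with
      | nil => simp at h2
      | cons s t =>
        rcases h1 s (List.mem_cons_self) with h5 | h5
        · subst h5
          refine ⟨Sum.inl ⟨t, ?_, by simpa using h2, fun k => by simpa using h3 (k+1), ?_⟩, rfl⟩
          · intro s hs; exact h1 s (List.mem_cons_of_mem _ hs)
          · simp only [List.sum_cons] at h4
            have : ((b - 5 : ℕ) : ℤ) = (b:ℤ) - 5 := by omega
            omega
        · subst h5
          refine ⟨Sum.inr ⟨t, ?_, by simpa using h2, fun k => by simpa using h3 (k+1), ?_⟩, rfl⟩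
          · intro s hs; exact h1 s (List.mem_cons_of_mem _ hs)
          · simp only [List.sum_cons] at h4; push_cast; omega
  · simp only [hb, if_false, zero_add]
    unfold wcount
    refine Nat.card_congr (Equiv.ofBijective (fun t => ?_) ⟨?_, ?_⟩).symm
    · exact ⟨(-2) :: t.1, cons_walk2 t.2⟩
    · rintro ⟨t, ht⟩ ⟨t', ht'⟩ h
      simp only [Subtype.mk.injEq, List.cons.injEq] at h
      exact Subtype.ext h.2
    · rintro ⟨l, hl⟩
      obtain ⟨h1, h2, h3, h4⟩ := hl
      cases l with
      | nil => simp at h2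
      | cons s t =>
        rcases h1 s (List.mem_cons_self) with h5 | h5
        · exfalso
          subst h5
          have h6 := h3 1
          simp only [List.drop_one, List.tail_cons, List.sum_cons] at h4 h6
          omega
        · subst h5
          refine ⟨⟨t, ?_, by simpa using h2, fun k => by simpa using h3 (k+1), ?_⟩, rfl⟩
          · intro s hs; exact h1 s (List.mem_cons_of_mem _ hs)
          · simp only [List.sum_cons] at h4; push_cast; omega

noncomputable def Fw (a b : ℕ) : PowerSeries ℚ :=
  PowerSeries.mk fun M => if M % 2 = 0 then (wcount a b (M / 2) : ℚ) else 0

lemma Fw_rec (a b : ℕ) :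
    Fw a b = (if a = b then 1 else 0) +
      X ^ 2 * ((if 5 ≤ b then Fw a (b - 5) else 0) + Fw a (b + 2)) := by
  ext M
  rw [map_add, coeff_X_pow_mul']
  match M with
  | 0 =>
    simp only [Fw, coeff_mk, wcount_zero]
    norm_num
    split_ifs <;> simp_all [wcount_zero]
  | 1 =>
    simp only [Fw, coeff_mk]
    norm_num
    split_ifs <;> simp_all [PowerSeries.coeff_one]
  | (M + 2) =>
    have h2 : (2:ℕ) ≤ M + 2 := by omega
    rw [if_pos h2]
    have : M + 2 - 2 = M := by omega
    rw [this]
    have hone : (coeff (M+2)) (if a = b then (1:ℚ⟦X⟧) else 0) = 0 := by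
      split_ifs <;> simp [PowerSeries.coeff_one]
    rw [hone, zero_add, map_add]
    simp only [Fw, coeff_mk]
    rcases Nat.even_or_odd M with he | ho
    · have hM : M % 2 = 0 := Nat.even_iff.mp he
      have hM2 : (M + 2) % 2 = 0 := by omega
      have hdiv : (M + 2) / 2 = M / 2 + 1 := by omega
      rw [if_pos hM, if_pos hM2, hdiv, wcount_succ]
      push_cast
      congr 1
      split_ifs with h5
      · simp [if_pos hM]
      · simp
    · have hM1 : M % 2 = 1 := Nat.odd_iff.mp ho
      have hM : ¬ M % 2 = 0 := by omega
      have hM2 : ¬ (M + 2) % 2 = 0 := by omega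
      rw [if_neg hM, if_neg hM2]
      split_ifs with h5 <;> simp [Fw, coeff_mk, if_neg hM]

lemma kill (u : PowerSeries ℚ) (hu0 : constantCoeff u = 0) (g : PowerSeries ℚ) (j M : ℕ)
    (hM : M < j) : coeff M (g * u ^ j) = 0 := by
  obtain ⟨v, hv⟩ := (PowerSeries.X_dvd_iff (φ := u)).mpr hu0
  rw [hv, mul_pow, show g * (X ^ j * v ^ j) = X ^ j * (g * v ^ j) by ring,
    coeff_X_pow_mul', if_neg (by omega)]

lemma kill' (u : PowerSeries ℚ) (hu0 : constantCoeff u = 0) (g h : PowerSeries ℚ) (c M : ℕ)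
    (hM : M < c) : coeff M (g * (h * u ^ c)) = 0 := by
  rw [show g * (h * u ^ c) = (g * h) * u ^ c by ring]
  exact kill u hu0 _ _ _ hM

noncomputable def Sw (a K : ℕ) (u : PowerSeries ℚ) : PowerSeries ℚ :=
  ∑ b ∈ Finset.range (K + 1), Fw a b * u ^ b

lemma Sw_succ (a m : ℕ) (u : PowerSeries ℚ) :
    Sw a (m + 1) u = Sw a m u + Fw a (m + 1) * u ^ (m + 1) := by
  rw [Sw, Sw, Finset.sum_range_succ]

lemma Sw_diff (a m r : ℕ) (u : PowerSeries ℚ) :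
    Sw a (m + r) u - Sw a m u
      = ∑ j ∈ Finset.range r, Fw a (m + 1 + j) * u ^ (m + 1 + j) := by
  induction r with
  | zero => simp
  | succ r ih =>
    rw [Finset.sum_range_succ, ← ih, show m + (r + 1) = (m + r) + 1 from rfl, Sw_succ,
      show m + 1 + r = m + r + 1 by ring]
    ring

lemma shift5 (f : ℕ → PowerSeries ℚ) (m : ℕ) :
    ∑ b ∈ Finset.range (m + 5 + 1), (if 5 ≤ b then f (b - 5) else 0)
      = ∑ c ∈ Finset.range (m + 1), f c := by
  induction m with
  | zero => simp [Finset.sum_range_succ]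
  | succ m ih =>
    rw [show m + 1 + 5 + 1 = (m + 5 + 1) + 1 by ring, Finset.sum_range_succ, ih,
      Finset.sum_range_succ, if_pos (by omega), show m + 5 + 1 - 5 = m + 1 by omega,
      Finset.sum_range_succ, Finset.sum_range_succ]

lemma shift2 (g : ℕ → PowerSeries ℚ) (m : ℕ) :
    ∑ b ∈ Finset.range (m + 3), g b
      = g 0 + g 1 + ∑ b ∈ Finset.range (m + 1), g (b + 2) := by
  induction m with
  | zero => simp [Finset.sum_range_succ]
  | succ m ih =>
    rw [show m + 1 + 3 = (m + 3) + 1 by ring, Finset.sum_range_succ, ih,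
      Finset.sum_range_succ]
    rw [show (∑ b ∈ Finset.range (m + 1 + 1), g (b + 2))
        = (∑ b ∈ Finset.range (m + 1), g (b + 2)) + g (m + 1 + 2) from Finset.sum_range_succ _ _,
      show m + 1 + 2 = m + 3 by ring,
      show (∑ b ∈ Finset.range (m + 1), g (b + 2))
        = (∑ b ∈ Finset.range m, g (b + 2)) + g (m + 2) from Finset.sum_range_succ _ _]
    ring

lemma EK (u : PowerSeries ℚ) (a T : ℕ) :
    u ^ 2 * Sw a (T + a + 5) u
      = u ^ (a + 2) + X ^ 2 * u ^ 7 * Sw a (T + a) u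
        + X ^ 2 * (Sw a (T + a + 7) u - Fw a 0 - Fw a 1 * u) := by
  have step1 : u ^ 2 * Sw a (T + a + 5) u
      = ∑ b ∈ Finset.range (T + a + 5 + 1),
          ((if a = b then 1 else 0) * u ^ (b + 2)
            + ((if 5 ≤ b then Fw a (b - 5) * u ^ ((b - 5) + 7) else 0) * X ^ 2
            + X ^ 2 * (Fw a (b + 2) * u ^ (b + 2)))) := by
    rw [Sw, Finset.mul_sum]
    refine Finset.sum_congr rfl fun b _ => ?_
    rw [show u ^ 2 * (Fw a b * u ^ b) = Fw a b * u ^ (b + 2) by ring]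
    nth_rewrite 1 [Fw_rec a b]
    split_ifs with h1 h2 <;>
      first
      | (rw [show b - 5 + 7 = b + 2 by omega]; ring)
      | ring
  rw [step1, Finset.sum_add_distrib, Finset.sum_add_distrib]
  have t1 : ∑ b ∈ Finset.range (T + a + 5 + 1),
        (if a = b then (1 : PowerSeries ℚ) else 0) * u ^ (b + 2) = u ^ (a + 2) := by
    rw [Finset.sum_eq_single_of_mem a (Finset.mem_range.mpr (by omega))]
    · simp
    · intro b _ hb
      rw [if_neg fun h => hb h.symm, zero_mul]
  have t2 : ∑ b ∈ Finset.range (T + a + 5 + 1),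
        (if 5 ≤ b then Fw a (b - 5) * u ^ ((b - 5) + 7) else 0) * X ^ 2
      = X ^ 2 * u ^ 7 * Sw a (T + a) u := by
    rw [← Finset.sum_mul]
    rw [show ∀ x : PowerSeries ℚ, x * X ^ 2 = X ^ 2 * x from fun x => mul_comm x _]
    rw [shift5 (fun c => Fw a c * u ^ (c + 7)) (T + a)]
    rw [Sw, Finset.mul_sum, Finset.mul_sum]
    refine Finset.sum_congr rfl fun c _ => ?_
    ring
  have t3 : ∑ b ∈ Finset.range (T + a + 5 + 1), X ^ 2 * (Fw a (b + 2) * u ^ (b + 2))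
      = X ^ 2 * (Sw a (T + a + 7) u - Fw a 0 - Fw a 1 * u) := by
    rw [← Finset.mul_sum]
    congr 1
    have h := shift2 (fun b => Fw a b * u ^ b) (T + a + 5)
    rw [show T + a + 5 + 3 = T + a + 7 + 1 by ring] at h
    rw [show T + a + 5 + 1 = T + a + 6 from rfl] at h ⊢
    have : ∑ b ∈ Finset.range (T + a + 6), Fw a (b + 2) * u ^ (b + 2)
        = Sw a (T + a + 7) u - Fw a 0 * u ^ 0 - Fw a 1 * u ^ 1 := by
      rw [Sw]
      rw [h]
      ring
    rw [this]
    simp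
  rw [t1, t2, t3]
  ring

lemma star (u : PowerSeries ℚ) (hu0 : constantCoeff u = 0)
    (hker : u ^ 2 = X ^ 2 * (1 + u ^ 7)) (a : ℕ) :
    u ^ (a + 2) = X ^ 2 * Fw a 0 + X ^ 2 * Fw a 1 * u := by
  rw [← sub_eq_zero]
  ext M
  rw [map_zero]
  set T := M + 2 with hT
  have hE := EK u a T
  have hD : u ^ (a + 2) - (X ^ 2 * Fw a 0 + X ^ 2 * Fw a 1 * u)
      = u ^ 2 * -(Sw a (T + a + 7) u - Sw a (T + a + 5) u)
        + (X ^ 2 * u ^ 7) * (Sw a (T + a + 7) u - Sw a (T + a) u) := by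
    linear_combination -hE + Sw a (T + a + 7) u * hker
  rw [hD]
  have d1 : Sw a (T + a + 7) u - Sw a (T + a + 5) u
      = ∑ j ∈ Finset.range 2, Fw a (T + a + 5 + 1 + j) * u ^ (T + a + 5 + 1 + j) := by
    rw [← Sw_diff a (T + a + 5) 2 u, show T + a + 5 + 2 = T + a + 7 by ring]
  have d2 : Sw a (T + a + 7) u - Sw a (T + a) u
      = ∑ j ∈ Finset.range 7, Fw a (T + a + 1 + j) * u ^ (T + a + 1 + j) := by
    rw [← Sw_diff a (T + a) 7 u]
  rw [d1, d2, map_add, mul_neg, Finset.mul_sum, Finset.mul_sum, map_neg, map_sum, map_sum]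
  rw [Finset.sum_eq_zero fun j _ => kill' u hu0 (u ^ 2) _ _ M (by omega),
    Finset.sum_eq_zero fun j _ => kill' u hu0 (X ^ 2 * u ^ 7) _ _ M (by omega)]
  simp

theorem main_series (u₁ u₂ : PowerSeries ℚ)
    (h₁0 : constantCoeff u₁ = 0) (h₂0 : constantCoeff u₂ = 0)
    (h₁ : u₁ ^ 2 = X ^ 2 * (1 + u₁ ^ 7)) (h₂ : u₂ ^ 2 = X ^ 2 * (1 + u₂ ^ 7))
    (hne : u₁ ≠ u₂) :
    u₁ ^ 5 + u₂ ^ 5 = X ^ 2 * Fw 3 0 + X ^ 2 * Fw 4 1 := by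
  have s31 := star u₁ h₁0 h₁ 3
  have s32 := star u₂ h₂0 h₂ 3
  have s41 := star u₁ h₁0 h₁ 4
  have s42 := star u₂ h₂0 h₂ 4
  norm_num at s31 s32 s41 s42
  have hd : u₁ - u₂ ≠ 0 := sub_ne_zero.mpr hne
  have key : (u₁ - u₂) * (X ^ 2 * Fw 3 0 + X ^ 2 * Fw 3 1 * (u₁ + u₂) - X ^ 2 * Fw 4 1) = 0 := by
    linear_combination (-u₁) * s31 + u₂ * s32 + s41 - s42
  have key2 : X ^ 2 * Fw 3 0 + X ^ 2 * Fw 3 1 * (u₁ + u₂) - X ^ 2 * Fw 4 1 = 0 :=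
    (mul_eq_zero.mp key).resolve_left hd
  linear_combination s31 + s32 + key2


def gg : ℕ × ℕ → ℤ := fun p => if p = (1, 0) then -2 else 5
def gg' : ℤ → ℕ × ℕ := fun s => if s = -2 then (1, 0) else (0, 1)

lemma Hsum (l : List (ℕ × ℕ)) (h : ∀ s ∈ l, s = (1, 0) ∨ s = (0, 1)) :
    (l.map gg).sum = -2 * ((l.sum).1 : ℤ) + 5 * ((l.sum).2 : ℤ) ∧
    l.length = (l.sum).1 + (l.sum).2 ∧ (l.map gg).map gg' = l := by
  induction l with
  | nil => simp
  | cons p t ih =>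
    obtain ⟨h1, h2, h3⟩ := ih (fun s hs => h s (List.mem_cons_of_mem _ hs))
    rcases h p (List.mem_cons_self) with hp | hp <;> subst hp <;>
      refine ⟨?_, ?_, ?_⟩ <;>
      simp [gg, gg', List.sum_cons, h1, h2, h3, Prod.fst_add, Prod.snd_add] <;>
      push_cast <;> ring

lemma Wsum (w : List ℤ) (h : ∀ s ∈ w, s = 5 ∨ s = -2) :
    (-2) * (((w.map gg').sum).1 : ℤ) + 5 * (((w.map gg').sum).2 : ℤ) = w.sum ∧
    ((w.map gg').sum).1 + ((w.map gg').sum).2 = w.length ∧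
    (w.map gg').map gg = w ∧
    (∀ s ∈ w.map gg', s = (1, 0) ∨ s = (0, 1)) := by
  induction w with
  | nil => simp
  | cons s t ih =>
    obtain ⟨h1, h2, h3, h4⟩ := ih (fun x hx => h x (List.mem_cons_of_mem _ hx))
    rcases h s (List.mem_cons_self) with hs | hs <;> subst hs <;>
      refine ⟨?_, ?_, ?_, ?_⟩ <;>
      simp [gg, gg', List.sum_cons, Prod.fst_add, Prod.snd_add, h1, h2, h3] <;>
      first
      | (push_cast; push_cast at h1; omega)
      | (intro a b hab; rcases hab with hab | hab
         · simp [hab]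
         · exact h4 (a, b) (by simpa using hab))

def PathP (c n : ℕ) (l : List (ℕ × ℕ)) : Prop :=
  (∀ s ∈ l, s = (1, 0) ∨ s = (0, 1)) ∧ l.sum = (5 * n - 1, 2 * n - 1) ∧
    ∀ k ≤ l.length, 5 * ((l.take k).sum).2 ≤ 2 * ((l.take k).sum).1 + c

lemma path_to_walk {c n : ℕ} (hn : 1 ≤ n) {l : List (ℕ × ℕ)} (hl : PathP c n l) :
    WalkP (3 + c) c (7 * n - 2) (l.map gg) := by
  obtain ⟨h1, h2, h3⟩ := hl
  obtain ⟨hs, hlen, -⟩ := Hsum l h1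
  refine ⟨?_, ?_, ?_, ?_⟩
  · intro s hs'
    obtain ⟨p, hp, rfl⟩ := List.mem_map.mp hs'
    rcases h1 p hp with h | h <;> subst h <;> simp [gg]
  · rw [List.length_map, hlen, h2]
    omega
  · intro k
    by_cases hk : k ≤ l.length
    · rw [← List.map_drop]
      have hd1 : ∀ s ∈ l.drop k, s = (1, 0) ∨ s = (0, 1) :=
        fun s hs' => h1 s (List.mem_of_mem_drop hs')
      obtain ⟨hds, -, -⟩ := Hsum (l.drop k) hd1
      rw [hds]
      have htd : (l.take k).sum + (l.drop k).sum = l.sum := List.sum_take_add_sum_drop l k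
      have h3k := h3 k hk
      have hx : ((l.take k).sum).1 + ((l.drop k).sum).1 = 5 * n - 1 := by
        rw [← Prod.fst_add, htd, h2]
      have hy : ((l.take k).sum).2 + ((l.drop k).sum).2 = 2 * n - 1 := by
        rw [← Prod.snd_add, htd, h2]
      push_cast
      omega
    · rw [List.drop_eq_nil_of_le (by rw [List.length_map]; omega)]
      simp
      positivity
  · rw [hs, h2]
    push_cast
    omega

lemma walk_to_path {c n : ℕ} (hn : 1 ≤ n) (hc : c ≤ 1) {w : List ℤ}
    (hw : WalkP (3 + c) c (7 * n - 2) w) : PathP c n (w.map gg') := by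
  obtain ⟨h1, h2, h3, h4⟩ := hw
  obtain ⟨hs, hlen, hrt, hunit⟩ := Wsum w h1
  have hx : ((w.map gg').sum).1 = 5 * n - 1 ∧ ((w.map gg').sum).2 = 2 * n - 1 := by
    rw [h2] at hlen
    constructor <;> omega
  refine ⟨hunit, Prod.ext hx.1 hx.2, ?_⟩
  intro k hk
  have h3k := h3 k
  set l := w.map gg' with hldef
  have hd1 : ∀ s ∈ l.take k, s = (1, 0) ∨ s = (0, 1) :=
    fun s hs' => hunit s (List.mem_of_mem_take hs')
  obtain ⟨hts, -, -⟩ := Hsum (l.take k) hd1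
  have htw : (l.take k).map gg = w.take k := by
    rw [hldef, ← List.map_take]
    exact (Wsum (w.take k) (fun s hs' => h1 s (List.mem_of_mem_take hs'))).2.2.1
  rw [htw] at hts
  have hsplit : (w.take k).sum + (w.drop k).sum = w.sum := List.sum_take_add_sum_drop w k
  push_cast at h3k h4 hts
  omega

lemma core (c n : ℕ) (hc : c ≤ 1) (hn : 1 ≤ n) :
    Nat.card {l : List (ℕ × ℕ) // (∀ s ∈ l, s = (1, 0) ∨ s = (0, 1)) ∧
        l.sum = (5 * n - 1, 2 * n - 1) ∧
        ∀ k ≤ l.length, 5 * ((l.take k).sum).2 ≤ 2 * ((l.take k).sum).1 + c}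
      = wcount (3 + c) c (7 * n - 2) := by
  apply Nat.card_congr
  exact ⟨fun l => ⟨(l : List (ℕ × ℕ)).map gg, path_to_walk hn l.2⟩,
         fun w => ⟨(w : List ℤ).map gg', walk_to_path hn hc w.2⟩,
         fun l => Subtype.ext (Hsum l.1 l.2.1).2.2,
         fun w => Subtype.ext (Wsum w.1 w.2.1).2.2.1⟩

lemma coeff_Fw (a b m : ℕ) : (coeff (2 * m)) (Fw a b) = wcount a b m := by
  simp [Fw, coeff_mk, Nat.mul_mod_right, Nat.mul_div_cancel_left m (by norm_num : 0 < 2)]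

lemma knuthA_eq (n : ℕ) (hn : 1 ≤ n) : knuthA n = wcount 4 1 (7 * n - 2) := by
  have := core 1 n (by norm_num) hn
  rw [knuthA]
  convert this using 2

lemma knuthB_eq (n : ℕ) (hn : 1 ≤ n) : knuthB n = wcount 3 0 (7 * n - 2) := by
  have h0 := core 0 n (by norm_num) hn
  rw [knuthB]
  rw [show (3 : ℕ) = 3 + 0 from rfl] 
  rw [← h0]
  apply Nat.card_congr
  exact Equiv.subtypeEquivRight fun l => by simp


/-- with `u₁, u₂` the two small roots of `u² = z(1+u⁷)` (power series in
`x = √z` vanishing at 0), `A_n + B_n = [z^{7n−1}](u₁⁵ + u₂⁵)`; in the variable `x`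
this is the coefficient of `x^{2(7n−1)}` in the (even) series `u₁⁵ + u₂⁵`. -/
theorem knuth_A_plus_B_coeff (u₁ u₂ : PowerSeries ℚ)
    (h₁0 : PowerSeries.constantCoeff u₁ = 0) (h₂0 : PowerSeries.constantCoeff u₂ = 0)
    (h₁ : u₁ ^ 2 = PowerSeries.X ^ 2 * (1 + u₁ ^ 7))
    (h₂ : u₂ ^ 2 = PowerSeries.X ^ 2 * (1 + u₂ ^ 7))
    (hne : u₁ ≠ u₂) (n : ℕ) (hn : 1 ≤ n) :
    (knuthA n + knuthB n : ℚ) =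
      PowerSeries.coeff (2 * (7 * n - 1)) (u₁ ^ 5 + u₂ ^ 5) := by
  rw [main_series u₁ u₂ h₁0 h₂0 h₁ h₂ hne, map_add, coeff_X_pow_mul', coeff_X_pow_mul',
    if_pos (by omega : 2 ≤ 2 * (7 * n - 1)), if_pos (by omega : 2 ≤ 2 * (7 * n - 1)),
    show 2 * (7 * n - 1) - 2 = 2 * (7 * n - 2) by omega,
    coeff_Fw, coeff_Fw, knuthA_eq n hn, knuthB_eq n hn]
  push_cast
  ring
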